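/- arXiv:1308.3394 — 6 statements merged into one kernel-verified Lean document; each statement's English description precedes it below -/
import Mathlib

section
/- Let v be a valuation on a field K with valuation ring O_v, maximal ideal M_v, and residue field k_v = O_v/M_v. For any finite simple extension F = k_v(α) of the residue field, there is a finite field extension L of K and an extension w of v to L such that the residue field of w is isomorphic over k_v to F. Moreover one can take L = K(β) where β is a root of a monic lift P(x) ∈ O_v[x] of the minimal polynomial of α, and then [L:K] = [F:k_v]. -/
open Polynomial IsLocalRing

set_option maxHeartbeats 1000000 in
set_option synthInstance.maxHeartbeats 400000 in
/-- Let `v` be a valuation on a field `K` with valuation ring `O_v` and residue field `k_v`.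
For any finite simple extension `F = k_v(α)` of the residue field, there is a finite extension
`L = K(β)` of `K`, where `β` is a root of a monic lift `P ∈ O_v[x]` of the minimal polynomial
of `α`, and a valuation subring `W` of `L` extending `O_v`, such that the residue field of `W`
is isomorphic to `F` over `k_v`, and `[L : K] = [F : k_v]`. -/
theorem stmt_1 {K : Type u} [Field K] {Γ₀ : Type*} [LinearOrderedCommGroupWithZero Γ₀]
    (v : Valuation K Γ₀)
    (F : Type v) [Field F] [Algebra (IsLocalRing.ResidueField v.valuationSubring) F]
    [FiniteDimensional (IsLocalRing.ResidueField v.valuationSubring) F]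
    (α : F) (hα : Algebra.adjoin (IsLocalRing.ResidueField v.valuationSubring) {α} = ⊤) :
    ∃ (L : Type u) (_ : Field L) (_ : Algebra K L), FiniteDimensional K L ∧
      Module.finrank K L = Module.finrank (IsLocalRing.ResidueField v.valuationSubring) F ∧
      (∃ (β : L) (P : Polynomial v.valuationSubring),
        Algebra.adjoin K {β} = ⊤ ∧ P.Monic ∧
        P.map (IsLocalRing.residue v.valuationSubring) =
          minpoly (IsLocalRing.ResidueField v.valuationSubring) α ∧
        Polynomial.eval₂ ((algebraMap K L).comp v.valuationSubring.subtype) β P = 0) ∧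
      ∃ W : ValuationSubring L,
        (∀ x : K, algebraMap K L x ∈ W ↔ x ∈ v.valuationSubring) ∧
        ∃ e : IsLocalRing.ResidueField W ≃+* F,
          ∀ (x : v.valuationSubring) (y : W), (y : L) = algebraMap K L (x : K) →
            e (IsLocalRing.residue W y) =
              algebraMap (IsLocalRing.ResidueField v.valuationSubring) F
                (IsLocalRing.residue v.valuationSubring x) := by
  classical
  have hint : IsIntegral (ResidueField v.valuationSubring) α := IsIntegral.of_finite _ α
  set μ := minpoly (ResidueField v.valuationSubring) α with hμdef
  have hμmonic : μ.Monic := minpoly.monic hint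
  have hμirr : Irreducible μ := minpoly.irreducible hint
  -- a monic lift P of μ
  obtain ⟨P0, hP0⟩ := Polynomial.map_surjective _ IsLocalRing.residue_surjective μ
  obtain ⟨P, hPmap, -, hPmonic⟩ :=
    Polynomial.lifts_and_degree_eq_and_monic ((Polynomial.mem_lifts μ).2 ⟨P0, hP0⟩) hμmonic
  have hPirr : Irreducible P :=
    Polynomial.Monic.irreducible_of_irreducible_map _ P hPmonic (hPmap ▸ hμirr)
  -- p = P viewed over K
  haveI : IsIntegrallyClosed v.valuationSubring := inferInstance
  set p : K[X] := P.map (algebraMap v.valuationSubring K) with hpdef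
  have hpmonic : p.Monic := hPmonic.map _
  have hpirr : Irreducible p :=
    (hPmonic.irreducible_iff_irreducible_map_fraction_map (K := K)).1 hPirr
  haveI : Fact (Irreducible p) := ⟨hpirr⟩
  haveI : Fact (Irreducible μ) := ⟨hμirr⟩
  set L := AdjoinRoot p with hLdef
  set β : L := AdjoinRoot.root p with hβdef
  set n := μ.natDegree with hndef
  have hμne : μ ≠ 0 := hμmonic.ne_zero
  have hpne : p ≠ 0 := hpmonic.ne_zero
  have hdegP : P.natDegree = n := by
    rw [hndef, ← hPmap, hPmonic.natDegree_map]
  have hdegp : p.natDegree = n := by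
    rw [hpdef, hPmonic.natDegree_map, hdegP]
  have hfinL : FiniteDimensional K L := (AdjoinRoot.powerBasis hpne).finite
  have hfrL : Module.finrank K L = n := by
    rw [(AdjoinRoot.powerBasis hpne).finrank, AdjoinRoot.powerBasis_dim, hdegp]
  -- equivalence AdjoinRoot μ ≃ₐ[k] F
  let eF : AdjoinRoot μ ≃ₐ[ResidueField v.valuationSubring] F :=
    (minpoly.equivAdjoin hint).trans ((Subalgebra.equivOfEq _ _ hα).trans Subalgebra.topEquiv)
  have hfrF : Module.finrank (ResidueField v.valuationSubring) F = n := by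
    rw [← eF.toLinearEquiv.finrank_eq, (AdjoinRoot.powerBasis hμne).finrank,
      AdjoinRoot.powerBasis_dim]
  -- the root equation
  set f : v.valuationSubring →+* L := (algebraMap K L).comp v.valuationSubring.subtype with hfdef
  have hevalP : Polynomial.eval₂ f β P = 0 := by
    rw [hfdef, ← Polynomial.eval₂_map]
    show Polynomial.eval₂ (algebraMap K L) β p = 0
    rw [AdjoinRoot.algebraMap_eq]
    exact AdjoinRoot.eval₂_root p
  -- Chevalley extension
  obtain ⟨W, hW, hloc⟩ := IsLocalRing.exists_factor_valuationRing f
  set g : v.valuationSubring →+* W := f.codRestrict W.toSubring hW with hgdef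
  have hsub_g : ∀ x : v.valuationSubring, (g x : L) = f x := fun x => rfl
  -- W lies over O
  have hmem : ∀ x : K, algebraMap K L x ∈ W ↔ x ∈ v.valuationSubring := by
    intro x
    constructor
    · intro hx
      by_contra hxO
      have hx0 : x ≠ 0 := by rintro rfl; exact hxO (zero_mem v.valuationSubring)
      have hxinv : x⁻¹ ∈ v.valuationSubring :=
        (ValuationSubring.mem_or_inv_mem v.valuationSubring x).resolve_left hxO
      set m : v.valuationSubring := ⟨x⁻¹, hxinv⟩ with hmdef
      have hunit : IsUnit (g m) := by
        refine isUnit_iff_exists_inv.2 ⟨⟨algebraMap K L x, hx⟩, ?_⟩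
        ext
        push_cast
        rw [hsub_g]
        show algebraMap K L x⁻¹ * algebraMap K L x = 1
        rw [← map_mul, inv_mul_cancel₀ hx0, map_one]
      have hmu := hloc.map_nonunit m hunit
      obtain ⟨u, hu⟩ := isUnit_iff_exists_inv.1 hmu
      have h1 : x⁻¹ * (u : K) = 1 := by
        simpa using Subtype.ext_iff.1 hu
      have hux : (u : K) = x := by
        field_simp at h1
        exact h1
      exact hxO (hux ▸ u.2)
    · intro hx
      exact hW ⟨x, hx⟩
  -- β is in W
  have hβW : β ∈ W := by
    have hint' : IsIntegral W β := by
      refine ⟨P.map g, hPmonic.map _, ?_⟩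
      rw [Polynomial.eval₂_map]
      have h2 : (algebraMap W L).comp g = f := rfl
      rw [h2, hevalP]
    obtain ⟨y, hy⟩ := (IsIntegrallyClosed.isIntegral_iff (R := W) (K := L)).1 hint'
    exact hy ▸ y.2
  set β' : W := ⟨β, hβW⟩ with hβ'def
  -- residue field machinery
  haveI : IsLocalHom g := hloc
  set φ : ResidueField v.valuationSubring →+* ResidueField W := ResidueField.map g with hφdef
  letI : Algebra (ResidueField v.valuationSubring) (ResidueField W) := φ.toAlgebra
  have halgφ : algebraMap (ResidueField v.valuationSubring) (ResidueField W) = φ := rfl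
  set β₀ : ResidueField W := residue W β' with hβ₀def
  have hevalg : Polynomial.eval₂ g β' P = 0 := by
    have h1 : (W.subtype) (Polynomial.eval₂ g β' P) = 0 := by
      rw [Polynomial.hom_eval₂]
      have h2 : (W.subtype).comp g = f := rfl
      rw [h2]
      exact hevalP
    exact Subtype.coe_injective h1
  have h0 : Polynomial.eval₂ φ β₀ μ = 0 := by
    rw [← hPmap, Polynomial.eval₂_map]
    have hcomp : φ.comp (residue v.valuationSubring) = (residue W).comp g := by
      ext t
      exact ResidueField.map_residue g t
    rw [hcomp, hβ₀def, ← Polynomial.hom_eval₂, hevalg, map_zero]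
  have h0' : Polynomial.aeval β₀ μ = 0 := by
    rw [Polynomial.aeval_def, halgφ]; exact h0
  set Ψ : AdjoinRoot μ →ₐ[ResidueField v.valuationSubring] ResidueField W :=
    AdjoinRoot.liftAlgHom μ (Algebra.ofId _ _) β₀ (by simpa [Polynomial.aeval_def] using h0') with hΨdef
  have hΨinj : Function.Injective Ψ := Ψ.toRingHom.injective
  have hΨof : ∀ c, Ψ (AdjoinRoot.of μ c) = φ c := by
    intro c
    rw [← AdjoinRoot.algebraMap_eq, Ψ.commutes, halgφ]
  -- key: any (n+1) residues are linearly dependent over k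
  have hdep : ∀ y : Fin (n + 1) → W,
      ¬ LinearIndependent (ResidueField v.valuationSubring) (fun i => residue W (y i)) := by
    intro y hind
    have hKind : LinearIndependent K (fun i => ((y i : L))) := by
      rw [Fintype.linearIndependent_iff]
      intro c hc
      by_contra hcn
      push_neg at hcn
      obtain ⟨j, hj⟩ := hcn
      obtain ⟨i₀, -, hmax⟩ := Finset.exists_max_image Finset.univ (fun i => v (c i))
        ⟨j, Finset.mem_univ j⟩
      have hv0 : v (c i₀) ≠ 0 := by
        intro h
        have h2 := hmax j (Finset.mem_univ j)
        rw [h, le_zero_iff] at h2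
        exact hj (v.zero_iff.1 h2)
      have hc0 : c i₀ ≠ 0 := fun h => hv0 (h ▸ v.map_zero)
      have hdmem : ∀ i, c i / c i₀ ∈ v.valuationSubring := by
        intro i
        rw [Valuation.mem_valuationSubring_iff, map_div₀]
        rw [div_le_one₀ (zero_lt_iff.2 hv0)]
        exact hmax i (Finset.mem_univ i)
      set d : Fin (n + 1) → v.valuationSubring := fun i => ⟨c i / c i₀, hdmem i⟩ with hddef
      have hsum : (∑ i, g (d i) * y i) = 0 := by
        apply Subtype.coe_injective
        push_cast
        calc (∑ i, ((g (d i) : L) * (y i : L)))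
            = ∑ i, algebraMap K L (c i / c i₀) * (y i : L) := by
              refine Finset.sum_congr rfl fun i _ => ?_
              rw [hsub_g]
              rfl
          _ = algebraMap K L (c i₀)⁻¹ * ∑ i, c i • (y i : L) := by
              rw [Finset.mul_sum]
              refine Finset.sum_congr rfl fun i _ => ?_
              rw [Algebra.smul_def, div_eq_mul_inv, map_mul, mul_comm (algebraMap K L (c i))]
              ring
          _ = 0 := by rw [hc, mul_zero]
      have hres : (∑ i, (residue v.valuationSubring (d i)) • residue W (y i)) = 0 := by
        have h3 := congrArg (residue W) hsum
        rw [map_sum, map_zero] at h3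
        rw [← h3]
        refine Finset.sum_congr rfl fun i _ => ?_
        rw [Algebra.smul_def, halgφ, map_mul, hφdef, ResidueField.map_residue]
      have h4 := Fintype.linearIndependent_iff.1 hind _ hres i₀
      have hd1 : d i₀ = 1 := by
        apply Subtype.coe_injective
        show c i₀ / c i₀ = 1
        exact div_self hc0
      rw [hd1, map_one] at h4
      exact one_ne_zero h4
    have hcard := hKind.fintype_card_le_finrank
    rw [hfrL, Fintype.card_fin] at hcard
    omega
  -- surjectivity of Ψ
  have hΨsurj : Function.Surjective Ψ := by
    intro z
    obtain ⟨w, rfl⟩ := IsLocalRing.residue_surjective (R := W) z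
    set pows : Fin n → ResidueField W := fun i => β₀ ^ (i : ℕ) with hpowsdef
    have hpowmem : ∀ i : Fin n, pows i ∈ Set.range Ψ := by
      intro i
      exact ⟨AdjoinRoot.root μ ^ (i : ℕ), by rw [map_pow, hΨdef, AdjoinRoot.liftAlgHom_root]⟩
    have hpowind : LinearIndependent (ResidueField v.valuationSubring) pows := by
      have hbasis := (AdjoinRoot.powerBasis hμne).basis.linearIndependent
      have h5 := hbasis.map' Ψ.toLinearMap (LinearMap.ker_eq_bot.2 hΨinj)
      have heq : (⇑Ψ.toLinearMap ∘ ⇑(AdjoinRoot.powerBasis hμne).basis)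
          = fun i : Fin (AdjoinRoot.powerBasis hμne).dim => β₀ ^ (i : ℕ) := by
        funext i
        simp only [Function.comp_apply, (AdjoinRoot.powerBasis hμne).basis_eq_pow,
          AlgHom.toLinearMap_apply, map_pow]
        rw [AdjoinRoot.powerBasis_gen, hΨdef, AdjoinRoot.liftAlgHom_root]
      rw [heq] at h5
      exact h5
    have hsnoc : ¬ LinearIndependent (ResidueField v.valuationSubring)
        (Fin.snoc pows (residue W w)) := by
      have h := hdep (Fin.snoc (fun i : Fin n => β' ^ (i : ℕ)) w)
      have heq : (fun i => residue W ((Fin.snoc (fun i : Fin n => β' ^ (i : ℕ)) w :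
          Fin (n+1) → W) i)) = Fin.snoc pows (residue W w) := by
        funext i
        refine Fin.lastCases ?_ ?_ i
        · simp
        · intro i
          simp [hpowsdef, map_pow, hβ₀def]
      rw [heq] at h
      exact h
    have hzspan : residue W w ∈
        Submodule.span (ResidueField v.valuationSubring) (Set.range pows) := by
      by_contra hz
      exact hsnoc (linearIndependent_fin_snoc.2 ⟨hpowind, hz⟩)
    have hle : Submodule.span (ResidueField v.valuationSubring) (Set.range pows) ≤
        Subalgebra.toSubmodule Ψ.range := by
      rw [Submodule.span_le]
      rintro _ ⟨i, rfl⟩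
      exact hpowmem i
    obtain ⟨t, ht⟩ := hle hzspan
    exact ⟨t, ht⟩
  set e0 : AdjoinRoot μ ≃+* ResidueField W :=
    RingEquiv.ofBijective (Ψ : AdjoinRoot μ →+* ResidueField W) ⟨hΨinj, hΨsurj⟩ with he0def
  set e : ResidueField W ≃+* F := e0.symm.trans eF.toRingEquiv with hedef
  refine ⟨L, inferInstance, inferInstance, hfinL, by rw [hfrL, hfrF],
    ⟨β, P, AdjoinRoot.adjoinRoot_eq_top, hPmonic, hPmap, hevalP⟩, W, hmem, e, ?_⟩
  intro x y hy
  have hyg : y = g x := Subtype.coe_injective (hy.trans (hsub_g x).symm)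
  have h1 : residue W y = φ (residue v.valuationSubring x) := by
    rw [hyg, hφdef, ResidueField.map_residue]
  have h2 : e0 (AdjoinRoot.of μ (residue v.valuationSubring x)) =
      φ (residue v.valuationSubring x) := hΨof _
  rw [h1, hedef, RingEquiv.coe_trans, Function.comp_apply, ← h2, RingEquiv.symm_apply_apply]
  show eF (AdjoinRoot.of μ (residue v.valuationSubring x)) = _
  rw [← AdjoinRoot.algebraMap_eq]
  exact eF.commutes _
end

section
/- Let K be an infinite field of characteristic p > 0. If K is not perfect (i.e., K^p ≠ K), then the index of the subgroup (K*)^p of p-th powers in the multiplicative group K* is infinite. In particular, if [K* : (K*)^p] is finite, then K is perfect. -/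
/-- An infinite field of characteristic `p > 0` which is not perfect has infinite index
`[K^* : (K^*)^p]`. -/
theorem stmt_3 (K : Type*) [Field K] [Infinite K] (p : ℕ) [Fact p.Prime] [CharP K p]
    (h : ∃ x : K, ∀ y : K, y ^ p ≠ x) :
    Infinite (Kˣ ⧸ (powMonoidHom p : Kˣ →* Kˣ).range) := by
  obtain ⟨a, ha⟩ := h
  have hp : p.Prime := Fact.out
  have key : ∀ c : K, a + c ^ p ≠ 0 := by
    intro c hc
    apply ha (-c)
    have hneg : (-c) ^ p = -(c ^ p) := by
      simpa [frobenius_def] using map_neg (frobenius K p) c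
    rw [hneg]
    linear_combination -hc
  have hinj : Function.Injective
      (fun c : K => (QuotientGroup.mk (Units.mk0 (a + c ^ p) (key c)) :
        Kˣ ⧸ (powMonoidHom p : Kˣ →* Kˣ).range)) := by
    intro c d hcd
    simp only [QuotientGroup.eq] at hcd
    obtain ⟨u, hu⟩ := hcd
    have hK : a + d ^ p = (a + c ^ p) * (u : K) ^ p := by
      have h2 : Units.mk0 (a + d ^ p) (key d) = Units.mk0 (a + c ^ p) (key c) * u ^ p := by
        rw [show (u : Kˣ) ^ p = (powMonoidHom p) u from rfl, hu]
        group
      have := congrArg (Units.val) h2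
      simpa using this
    set v : K := (u : K) with hv
    by_cases hv1 : v = 1
    · rw [hv1, one_pow, mul_one] at hK
      have hK' : d ^ p = c ^ p := add_left_cancel hK
      have hz : (c - d) ^ p = 0 := by rw [sub_pow_char, hK', sub_self]
      have := pow_eq_zero_iff hp.ne_zero |>.mp hz
      exact sub_eq_zero.mp this
    · exfalso
      apply ha ((c * v - d) / (1 - v))
      have h1v : (1 : K) - v ≠ 0 := fun hz => hv1 (sub_eq_zero.mp hz).symm
      have h1vp : (1 : K) - v ^ p ≠ 0 := by
        have : ((1 : K) - v) ^ p = 1 - v ^ p := by rw [sub_pow_char, one_pow]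
        rw [← this]
        exact pow_ne_zero p h1v
      rw [div_pow, sub_pow_char, mul_pow, sub_pow_char, one_pow, div_eq_iff h1vp]
      linear_combination -hK
  exact Infinite.of_injective _ hinj
end

section
/- Let K be a field of characteristic p > 0 with a valuation v such that the index [K* : (K*)^p] is finite and the residue field k_v is infinite. Suppose a, b ∈ O_v are such that the residues of a and b lie in distinct cosets of (k_v)^p in k_v (as a multiplicative coset question: ā·(k_v)^p ≠ b̄·(k_v)^p, with ā, b̄ ≠ 0). Then a(K*)^p ≠ b(K*)^p. Consequently, if [K* : (K*)^p] is finite then the residue field k_v is perfect. -/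
/-- Let `K` be a field of characteristic `p > 0` with a valuation `v` such that
`[K^* : (K^*)^p]` is finite and the residue field `k_v` is infinite. If `a, b ∈ O_v` have
nonzero residues lying in distinct cosets of `(k_v^*)^p`, then `a` and `b` lie in distinct
cosets of `(K^*)^p`. Consequently, the residue field `k_v` is perfect (Frobenius is
surjective on it). -/
theorem stmt_8 {K : Type*} [Field K] (p : ℕ) [Fact p.Prime] [CharP K p]
    {Γ₀ : Type*} [LinearOrderedCommGroupWithZero Γ₀] (v : Valuation K Γ₀)
    (hfin : (powMonoidHom p : Kˣ →* Kˣ).range.FiniteIndex)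
    (hinf : Infinite (IsLocalRing.ResidueField v.valuationSubring)) :
    (∀ a b : v.valuationSubring,
      IsLocalRing.residue v.valuationSubring a ≠ 0 →
      IsLocalRing.residue v.valuationSubring b ≠ 0 →
      (∀ c : IsLocalRing.ResidueField v.valuationSubring,
        IsLocalRing.residue v.valuationSubring a ≠ IsLocalRing.residue v.valuationSubring b * c ^ p) →
      ∀ c : K, (a : K) ≠ (b : K) * c ^ p) ∧
    (∀ z : IsLocalRing.ResidueField v.valuationSubring, ∃ w, w ^ p = z) := by
  set R := v.valuationSubring with hR
  set k := IsLocalRing.ResidueField R with hk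
  have hp : p.Prime := Fact.out
  have hp0 : p ≠ 0 := hp.ne_zero
  -- characteristic of the residue field
  haveI : CharP R p := by
    constructor
    intro n
    rw [← CharP.cast_eq_zero_iff K p n]
    constructor
    · intro h
      have : ((n : R) : K) = (n : K) := by push_cast; ring
      rw [← this, h]; simp
    · intro h
      have : ((n : R) : K) = (n : K) := by push_cast; ring
      exact Subtype.ext (by rw [this, h]; simp)
  haveI : CharP k p := by
    rw [CharP.charP_iff_prime_eq_zero hp]
    have h1 : (p : k) = IsLocalRing.residue R (p : R) := (map_natCast _ p).symm
    rw [h1, CharP.cast_eq_zero R p, map_zero]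
  -- Part 1
  have part1 : ∀ a b : R,
      IsLocalRing.residue R a ≠ 0 → IsLocalRing.residue R b ≠ 0 →
      (∀ c : k, IsLocalRing.residue R a ≠ IsLocalRing.residue R b * c ^ p) →
      ∀ c : K, (a : K) ≠ (b : K) * c ^ p := by
    intro a b ha hb hab c hc
    -- b is a unit of R
    have hbu : IsUnit b := (IsLocalRing.residue_ne_zero_iff_isUnit b).mp hb
    obtain ⟨bu, rfl⟩ := hbu
    -- v b = 1
    have hvb : v ((bu : R) : K) = 1 := by
      have h1 : v (((bu : R) : K)) * v (((bu⁻¹ : Rˣ) : R) : K) = 1 := by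
        rw [← v.map_mul]
        have : (((bu : R) : K)) * ((((bu⁻¹ : Rˣ) : R)) : K) = 1 := by
          norm_cast
          simp
        rw [this, v.map_one]
      have h2 : v (((bu : R) : K)) ≤ 1 := (bu : R).2
      have h3 : v ((((bu⁻¹ : Rˣ) : R)) : K) ≤ 1 := ((bu⁻¹ : Rˣ) : R).2
      rcases lt_or_eq_of_le h2 with h | h
      · exfalso
        have : v (((bu : R) : K)) * v (((bu⁻¹ : Rˣ) : R) : K) < 1 := by
          calc v (((bu : R) : K)) * v (((bu⁻¹ : Rˣ) : R) : K) ≤ v (((bu : R) : K)) * 1 :=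
                mul_le_mul_right h3 _
            _ = v (((bu : R) : K)) := mul_one _
            _ < 1 := h
        rw [h1] at this
        exact absurd this (lt_irrefl 1)
      · exact h
    -- c ∈ R
    have hvc : v c ≤ 1 := by
      have hva : v (a : K) ≤ 1 := a.2
      have : v ((bu : R) : K) * v c ^ p ≤ 1 := by
        rw [← v.map_pow, ← v.map_mul, ← hc]; exact hva
      rw [hvb, one_mul] at this
      exact (pow_le_one_iff hp0).mp this
    set c' : R := ⟨c, (Valuation.mem_valuationSubring_iff v c).mpr hvc⟩ with hc'
    have heq : a = (bu : R) * c' ^ p := by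
      apply Subtype.ext
      push_cast
      exact hc
    apply hab (IsLocalRing.residue R c')
    rw [heq, map_mul, map_pow]
  refine ⟨part1, ?_⟩
  -- Part 2
  by_contra hz
  push_neg at hz
  obtain ⟨z, hznp⟩ := hz
  have hzne : z ≠ 0 := by
    intro h
    exact hznp 0 (by rw [h, zero_pow hp0])
  -- For each t : k, pick a lift of z + t^p
  have hlift : ∀ t : k, ∃ a : R, IsLocalRing.residue R a = z + t ^ p :=
    fun t => IsLocalRing.residue_surjective (z + t ^ p)
  choose a ha using hlift
  have hres_ne : ∀ t : k, IsLocalRing.residue R (a t) ≠ 0 := by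
    intro t h
    rw [ha t] at h
    -- z = (-t)^p, contradiction
    apply hznp (-t)
    have : (-t) ^ p = - t ^ p := by
      rw [neg_pow, neg_one_pow_char k, neg_one_mul]
    rw [this, eq_comm, ← add_eq_zero_iff_eq_neg]
    exact h
  -- each a t is nonzero in K
  have ne0 : ∀ t : k, ((a t : R) : K) ≠ 0 := by
    intro t h
    apply hres_ne t
    have : a t = 0 := Subtype.ext h
    rw [this, map_zero]
  haveI := hfin
  -- the map into the quotient group
  set H := (powMonoidHom p : Kˣ →* Kˣ).range with hH
  set f : k → Kˣ ⧸ H := fun t => QuotientGroup.mk (Units.mk0 _ (ne0 t)) with hf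
  have hfinj : Function.Injective f := by
    intro s t hst
    rw [hf] at hst
    simp only [QuotientGroup.eq] at hst
    obtain ⟨u, hu⟩ := hst
    have hK : ((a t : R) : K) = ((a s : R) : K) * (u : K) ^ p := by
      have h2 : Units.mk0 _ (ne0 s) * powMonoidHom p u = Units.mk0 _ (ne0 t) := by
        rw [hu, mul_inv_cancel_left]
      have h3 := congrArg (Units.val) h2
      simp only [powMonoidHom_apply, Units.val_mul, Units.val_pow_eq_pow_val,
        Units.val_mk0] at h3
      exact h3.symm
    -- contrapositive of part 1
    have hnot : ¬ (∀ c : k, IsLocalRing.residue R (a t) ≠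
        IsLocalRing.residue R (a s) * c ^ p) := by
      intro hyp
      exact part1 (a t) (a s) (hres_ne t) (hres_ne s) hyp (u : K) hK
    push_neg at hnot
    obtain ⟨w, hw⟩ := hnot
    rw [ha t, ha s] at hw
    -- z + t^p = (z + s^p) * w^p
    have key : z * (1 - w) ^ p = (s * w - t) ^ p := by
      rw [sub_pow_char, sub_pow_char, one_pow, mul_pow, mul_sub, mul_one]
      have := hw
      ring_nf at this ⊢
      linear_combination this
    by_cases hw1 : w = 1
    · rw [hw1, mul_one, sub_self, zero_pow hp0, mul_zero, eq_comm, pow_eq_zero_iff hp0,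
        sub_eq_zero] at key
      exact key
    · exfalso
      have h1w : (1 : k) - w ≠ 0 := sub_ne_zero.mpr (Ne.symm hw1)
      apply hznp ((s * w - t) / (1 - w))
      rw [div_pow, ← key, mul_div_assoc, div_self (pow_ne_zero p h1w), mul_one]
  haveI := Infinite.of_injective f hfinj
  exact not_finite (Kˣ ⧸ H)
end

section
/- Let K be an infinite field such that every polynomial image is cofinite in the following sense: for every polynomial P ∈ K[x] of positive degree, the set K \ P(K) of values not attained by P is finite. Then for every n > 0, every element of K* is an n-th power, i.e., (K*)^n = K*. -/
/-- If `K` is an infinite field in which every polynomial of positive degree attains all but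
finitely many values, then every nonzero element of `K` is an `n`-th power, for every `n > 0`. -/
theorem stmt_9 (K : Type*) [Field K] [Infinite K]
    (h : ∀ P : Polynomial K, 0 < P.natDegree → {y : K | ∀ a : K, P.eval a ≠ y}.Finite) :
    ∀ n : ℕ, 0 < n → ∀ y : K, y ≠ 0 → ∃ x : K, x ^ n = y := by
  intro n hn y hy
  by_contra hfalse
  push_neg at hfalse
  have hM : {z : K | ∀ a : K, (Polynomial.X ^ n : Polynomial K).eval a ≠ z}.Finite := by
    refine h _ ?_
    simpa [Polynomial.natDegree_X_pow] using hn
  -- the set of n-th powers of nonzero elements is infinite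
  set A : Set K := {z : K | ∃ x : K, x ≠ 0 ∧ x ^ n = z} with hAdef
  have hA : A.Infinite := by
    intro hfin
    have hfib : ∀ z : K, {x : K | x ^ n = z}.Finite := by
      intro z
      have hp : (Polynomial.X ^ n - Polynomial.C z : Polynomial K) ≠ 0 := by
        intro hp0
        have := congrArg Polynomial.natDegree hp0
        rw [Polynomial.natDegree_X_pow_sub_C] at this
        simp at this
        omega
      refine (Polynomial.finite_setOf_isRoot hp).subset ?_
      intro x hx
      simp only [Set.mem_setOf_eq] at hx ⊢
      simp [Polynomial.IsRoot, hx]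
    have : (Set.univ : Set K).Finite := by
      have hsub : (Set.univ : Set K) ⊆ {(0 : K)} ∪ ⋃ z ∈ A, {x : K | x ^ n = z} := by
        intro x _
        by_cases hx : x = 0
        · exact Or.inl (by simp [hx])
        · refine Or.inr ?_
          refine Set.mem_biUnion (show x ^ n ∈ A from ⟨x, hx, rfl⟩) rfl
      exact ((Set.finite_singleton 0).union (hfin.biUnion fun z _ => hfib z)).subset hsub
    exact Set.infinite_univ this
  -- y • A is infinite and contained in the missed values
  have himg : ((fun t => y * t) '' A).Infinite :=
    hA.image ((mul_right_injective₀ hy).injOn)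
  have hsub : (fun t => y * t) '' A ⊆ {z : K | ∀ a : K, (Polynomial.X ^ n : Polynomial K).eval a ≠ z} := by
    rintro w ⟨z, ⟨x, hx, rfl⟩, rfl⟩ a ha
    simp only [Polynomial.eval_pow, Polynomial.eval_X] at ha
    apply hfalse (a * x⁻¹)
    rw [mul_pow, ha, inv_pow, mul_assoc, mul_inv_cancel₀ (pow_ne_zero n hx), mul_one]
  exact (himg.mono hsub) hM
end

section
/- Let K be an infinite field such that for every polynomial P ∈ K[x] of positive degree the complement K \ P(K) is finite, and let v be a non-trivial valuation on K. Then the value group Γ_v is divisible. -/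
/-- If `K` is an infinite field such that every polynomial of positive degree attains all but
finitely many values, then the value group of any non-trivial valuation on `K` is divisible. -/
theorem stmt_11 (K : Type*) [Field K] [Infinite K]
    (hmin : ∀ P : Polynomial K, 0 < P.natDegree → {y : K | ∀ a : K, P.eval a ≠ y}.Finite)
    {Γ : Type*} [AddCommGroup Γ] [LinearOrder Γ] [IsOrderedAddMonoid Γ]
    (v : K → WithTop Γ)
    (h0 : ∀ x : K, v x = ⊤ ↔ x = 0)
    (hmul : ∀ x y : K, v (x * y) = v x + v y)
    (hadd : ∀ x y : K, min (v x) (v y) ≤ v (x + y))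
    (hsurj : Function.Surjective v)
    (hnt : ∃ x : K, x ≠ 0 ∧ v x ≠ (0 : WithTop Γ)) :
    ∀ γ : Γ, ∀ n : ℕ, 0 < n → ∃ δ : Γ, n • δ = γ := by
  -- v 1 = 0
  have h1 : v 1 = 0 := by
    have h := hmul 1 1
    rw [one_mul] at h
    have hne : v 1 ≠ ⊤ := by simp [h0]
    obtain ⟨g, hg⟩ := WithTop.ne_top_iff_exists.mp hne
    rw [← hg, ← WithTop.coe_add, WithTop.coe_eq_coe] at h
    have : g = 0 := left_eq_add.mp h
    rw [← hg, this, WithTop.coe_zero]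
  have vpow : ∀ (b : K) (k : ℕ), v (b ^ k) = k • v b := by
    intro b k
    induction k with
    | zero => simpa using h1
    | succ k ih =>
      rw [pow_succ, hmul, ih, succ_nsmul]
  have hcoe : ∀ (m : ℕ) (x : Γ), m • (x : WithTop Γ) = ((m • x : Γ) : WithTop Γ) := by
    intro m x
    induction m with
    | zero => simp
    | succ k ih => rw [succ_nsmul, succ_nsmul, ih, WithTop.coe_add]
  intro γ n hn
  obtain ⟨a, hva⟩ := hsurj (γ : WithTop Γ)
  have ha : a ≠ 0 := by
    intro h
    rw [h, (h0 0).mpr rfl] at hva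
    exact (WithTop.coe_ne_top hva.symm)
  -- a is an n-th power
  have hpow : ∃ b : K, b ^ n = a := by
    by_contra hc
    push_neg at hc
    have hT : {y : K | ∀ c : K, c ^ n ≠ y}.Finite := by
      have := hmin (Polynomial.X ^ n) (by simpa using hn)
      simpa using this
    set T := {y : K | ∀ c : K, c ^ n ≠ y} with hTdef
    have hTc : Tᶜ.Infinite := hT.infinite_compl
    have himg : ((a * ·) '' Tᶜ).Infinite :=
      hTc.image (Set.injOn_of_injective (mul_right_injective₀ ha))
    have hsub : ((a * ·) '' Tᶜ) ⊆ insert 0 T := by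
      rintro z ⟨y, hy, rfl⟩
      simp only [Set.mem_compl_iff, Set.mem_setOf_eq, hTdef] at hy
      push_neg at hy
      obtain ⟨c, hcn⟩ := hy
      by_cases hz : a * y = 0
      · exact Set.mem_insert_iff.mpr (Or.inl hz)
      · right
        intro d hd
        have hcne : c ≠ 0 := by
          intro h
          rw [h] at hcn
          apply hz
          rw [← hcn]
          simp [zero_pow hn.ne']
        refine hc (d * c⁻¹) ?_
        rw [mul_pow, hd, ← hcn]
        field_simp
        rw [← mul_pow, mul_one_div_cancel hcne, one_pow]
    exact himg ((hT.insert 0).subset hsub)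
  obtain ⟨b, hb⟩ := hpow
  have hbne : b ≠ 0 := by
    intro h
    apply ha
    rw [← hb, h, zero_pow hn.ne']
  have hvb : v b ≠ ⊤ := fun h => hbne ((h0 b).mp h)
  obtain ⟨δ, hδ⟩ := WithTop.ne_top_iff_exists.mp hvb
  refine ⟨δ, ?_⟩
  have : v (b ^ n) = (γ : WithTop Γ) := by rw [hb, hva]
  rw [vpow, ← hδ, hcoe, WithTop.coe_eq_coe] at this
  exact this
end

section
/- Let K be an infinite field such that for every polynomial P ∈ K[x] of positive degree the complement K \ P(K) is finite, and let v be a non-trivial valuation on K with valuation ring O_v, maximal ideal M_v and residue field k_v. Then k_v is algebraically closed. -/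
open Polynomial

/-- If `K` is an infinite field such that every polynomial of positive degree attains all but
finitely many values, then the residue field of any non-trivial valuation on `K` is
algebraically closed. -/
theorem stmt_12 (K : Type*) [Field K] [Infinite K]
    (hmin : ∀ P : Polynomial K, 0 < P.natDegree → {y : K | ∀ a : K, P.eval a ≠ y}.Finite)
    {Γ₀ : Type*} [LinearOrderedCommGroupWithZero Γ₀] (v : Valuation K Γ₀)
    (hnt : ∃ x : K, x ≠ 0 ∧ v x ≠ 1) :
    IsAlgClosed (IsLocalRing.ResidueField v.valuationSubring) := by
  set R := v.valuationSubring with hR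
  have hints : v.Integers R :=
    { hom_inj := Subtype.coe_injective
      map_le_one := fun r => r.2
      exists_of_le_one := fun r hr => ⟨⟨r, hr⟩, rfl⟩ }
  -- the set of elements of valuation < 1 is infinite
  have hSinf : {y : K | v y < 1}.Infinite := by
    obtain ⟨x, hx0, hx1⟩ := hnt
    obtain ⟨z, hz0, hz1⟩ : ∃ z : K, z ≠ 0 ∧ v z < 1 := by
      rcases lt_or_gt_of_ne hx1 with h | h
      · exact ⟨x, hx0, h⟩
      · refine ⟨x⁻¹, inv_ne_zero hx0, ?_⟩
        rw [map_inv₀]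
        exact inv_lt_one_of_one_lt₀ h
    apply Set.infinite_of_injective_forall_mem (f := fun n : ℕ => z ^ (n + 1))
    case hi =>
      intro m n hmn
      simp only at hmn
      by_contra hne
      wlog hlt : m < n generalizing m n
      · exact this hmn.symm (Ne.symm hne) (by omega)
      have hzz : z ^ (m + 1) * z ^ (n - m) = z ^ (m + 1) * 1 := by
        rw [mul_one, ← pow_add]
        rw [hmn]; congr 1; omega
      have hz : z ^ (n - m) = 1 :=
        mul_left_cancel₀ (pow_ne_zero _ hz0) hzz
      have hv1 : v z ^ (n - m) = 1 := by
        rw [← map_pow, hz, map_one]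
      have hlt1 : v z ^ (n - m) < 1 := pow_lt_one₀ zero_le' hz1 (by omega)
      exact absurd hv1 hlt1.ne
    case hf =>
      intro n
      simp only [Set.mem_setOf_eq, map_pow]
      exact pow_lt_one₀ zero_le' hz1 (Nat.succ_ne_zero n)
  apply IsAlgClosed.of_exists_root
  intro p hpm hpi
  -- lift p to a monic polynomial over R
  have hsurj : Function.Surjective (IsLocalRing.residue R) :=
    IsLocalRing.residue_surjective
  have hlift : p ∈ lifts (IsLocalRing.residue R) := by
    rw [lifts_iff_coeff_lifts]
    exact fun n => hsurj _
  obtain ⟨q, hq, hqdeg, hqm⟩ := lifts_and_degree_eq_and_monic hlift hpm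
  -- map to K
  set Q : K[X] := q.map (algebraMap R K) with hQ
  have hQm : Q.Monic := hqm.map _
  have hQdeg : 0 < Q.natDegree := by
    have h1 : Q.natDegree = q.natDegree := q.natDegree_map_eq_of_injective Subtype.coe_injective
    have h2 : q.natDegree = p.natDegree := natDegree_eq_of_degree_eq hqdeg
    rw [h1, h2]
    exact hpi.natDegree_pos
  -- find a with Q.eval a of valuation < 1
  obtain ⟨y, hy⟩ := (hSinf.diff (hmin Q hQdeg)).nonempty
  obtain ⟨hy1, hy2⟩ := hy
  simp only [Set.mem_setOf_eq, not_forall, not_not] at hy2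
  obtain ⟨a, ha⟩ := hy2
  have hy1' : v y ≤ 1 := le_of_lt hy1
  set c : R := ⟨y, hy1'⟩ with hc
  -- a is integral over R
  have h1 : eval₂ (algebraMap R K) a q = Q.eval a := (Polynomial.eval_map _ _).symm
  have heval : eval₂ (algebraMap R K) a (q - C c) = 0 := by
    rw [eval₂_sub, eval₂_C, h1, ha]
    show y - y = 0
    ring
  have hqnd : 0 < q.natDegree := by
    rw [natDegree_eq_of_degree_eq hqdeg]; exact hpi.natDegree_pos
  have hmonic : (q - C c).Monic := by
    apply hqm.sub_of_left
    exact lt_of_le_of_lt degree_C_le (natDegree_pos_iff_degree_pos.mp hqnd)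
  have hint : IsIntegral R a := ⟨q - C c, hmonic, heval⟩
  have haR : a ∈ R := hints.mem_of_integral hint
  set A : R := ⟨a, haR⟩ with hA
  refine ⟨IsLocalRing.residue R A, ?_⟩
  have hqA : q.eval A = c := by
    apply Subtype.ext
    have hev : Q.eval a = ((q.eval A : R) : K) := by
      rw [hQ, Polynomial.eval_map]
      show eval₂ (algebraMap R K) ((algebraMap R K) A) q = _
      exact eval₂_at_apply _ _
    rw [← hev, ha]
  have hres : p.eval (IsLocalRing.residue R A) = IsLocalRing.residue R (q.eval A) := by
    rw [← hq, Polynomial.eval_map]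
    exact eval₂_at_apply _ _
  rw [hres, hqA, IsLocalRing.residue_eq_zero_iff, IsLocalRing.mem_maximalIdeal,
    mem_nonunits_iff]
  intro hu
  have := hints.one_of_isUnit hu
  have hvy : v y = 1 := this
  exact absurd hvy hy1.ne
end
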